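/- Let (T,<) be a linear order, t₁ ∈ T, and δ₁,...,δₖ ⊆ T with an index set O ⊆ {1,...,k}. Suppose for each i ∈ {1,...,k} the set Fᵢ ⊆ T is defined by: Fₖ = δₖ, and for 2 ≤ i ≤ k, F_{i-1} = δ_{i-1} ∩ G where G is: {t | ∃ t' the successor of t with t' ∈ Fᵢ} if both i-1 ∈ O and i ∈ O; {t | (δᵢ Until Fᵢ) at t} if i-1 ∈ O, i ∉ O; {t | (δ_{i-1} Until Fᵢ) at t} if i-1 ∉ O, i ∈ O; {t | (δ_{i-1} Until* Fᵢ) at t} if i-1 ∉ O and i ∉ O. Then: if there is t ≥ t₁ and a partition of [t₁,t] into nonempty consecutive order-convex intervals I₁ < I₂ < ... < Iₖ such that Iⱼ ⊆ δⱼ for all j and Iⱼ is a singleton for each j ∈ O, then t₁ ∈ F₁. -/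

import Mathlib

def Until {T : Type*} [LinearOrder T] (A B : Set T) (t : T) : Prop :=
  ∃ t', t < t' ∧ t' ∈ B ∧ ∀ y, t < y → y < t' → y ∈ A

/-- Order-convexity of a set. -/
def IsConvex {T : Type*} [LinearOrder T] (I : Set T) : Prop :=
  ∀ a ∈ I, ∀ b ∈ I, ∀ c, a ≤ c → c ≤ b → c ∈ I

/-- (P Until* Q) holds at t: some closed interval [t,t'] with t' > t splits into
nonempty convex pieces I₁ < I₂ with I₁ ⊆ P, I₂ ⊆ Q. -/
def UntilStar {T : Type*} [LinearOrder T] (P Q : Set T) (t : T) : Prop :=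
  ∃ t', t < t' ∧ ∃ I₁ I₂ : Set T,
    I₁.Nonempty ∧ I₂.Nonempty ∧ IsConvex I₁ ∧ IsConvex I₂ ∧
    I₁ ∪ I₂ = Set.Icc t t' ∧ Disjoint I₁ I₂ ∧
    (∀ a ∈ I₁, ∀ b ∈ I₂, a < b) ∧ I₁ ⊆ P ∧ I₂ ⊆ Q

/-- A partition of [a,b] into consecutive nonempty convex intervals I 0 < I 1 < … -/
def IsDecomp {T : Type*} [LinearOrder T] (a b : T) {k : ℕ} (I : Fin k → Set T) : Prop :=
  (∀ j, (I j).Nonempty) ∧ (∀ j, IsConvex (I j)) ∧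
    (∀ i j : Fin k, i < j → ∀ x ∈ I i, ∀ y ∈ I j, x < y) ∧
    (⋃ j, I j) = Set.Icc a b

/-- The defining equations of the formulas F₁,…,F_{k} from δ₁,…,δ_k and O
 (here k = n+1, indices are 0-based). `Until ∅` expresses `False Until`,
 i.e. "the successor of t exists and lies in …". -/
def DefinesF {T : Type*} [LinearOrder T] {n : ℕ} (δ F : Fin (n + 1) → Set T)
    (O : Finset (Fin (n + 1))) : Prop :=
  F (Fin.last n) = δ (Fin.last n) ∧
    ∀ i : Fin n,
      F i.castSucc = δ i.castSucc ∩ {t |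
        if i.castSucc ∈ O then
          (if i.succ ∈ O then Until (∅ : Set T) (F i.succ) t
           else Until (δ i.succ) (F i.succ) t)
        else
          (if i.succ ∈ O then Until (δ i.castSucc) (F i.succ) t
           else UntilStar (δ i.castSucc) (F i.succ) t)}

theorem stmt_13 {T : Type*} [LinearOrder T] {n : ℕ}
    (δ F : Fin (n + 1) → Set T) (O : Finset (Fin (n + 1)))
    (hF : DefinesF δ F O) (t₁ : T)
    (h : ∃ t, t₁ ≤ t ∧ ∃ I : Fin (n + 1) → Set T,
      IsDecomp t₁ t I ∧ (∀ j, I j ⊆ δ j) ∧ (∀ j ∈ O, ∃ x, I j = {x})) :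
    t₁ ∈ F 0 := by
  obtain ⟨t, ht, I, ⟨hne, hconv, hord, hunion⟩, hδ, hO⟩ := h
  have hIcc : ∀ j, I j ⊆ Set.Icc t₁ t := by
    intro j y hy
    rw [← hunion]; exact Set.mem_iUnion.mpr ⟨j, hy⟩
  have hloc : ∀ y, t₁ ≤ y → y ≤ t → ∃ j, y ∈ I j := by
    intro y h1 h2
    have : y ∈ ⋃ j, I j := by rw [hunion]; exact ⟨h1, h2⟩
    exact Set.mem_iUnion.mp this
  have key : ∀ i, I i ⊆ F i := by
    intro i
    induction i using Fin.reverseInduction with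
    | last => rw [hF.1]; exact hδ _
    | cast i ih =>
      have hcs : i.castSucc < i.succ := Fin.castSucc_lt_succ
      have hbet : ∀ x ∈ I i.castSucc, ∀ s ∈ I i.succ, ∀ y, x < y → y < s →
          y ∈ I i.castSucc ∨ y ∈ I i.succ := by
        intro x hx s hs y hxy hys
        have h1 : t₁ ≤ y := le_trans (hIcc _ hx).1 hxy.le
        have h2 : y ≤ t := le_trans hys.le (hIcc _ hs).2
        obtain ⟨j, hj⟩ := hloc y h1 h2
        rcases lt_trichotomy j i.castSucc with hc | hc | hc
        · exact absurd (hord j i.castSucc hc y hj x hx) (not_lt.mpr hxy.le)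
        · exact Or.inl (hc ▸ hj)
        · rcases eq_or_lt_of_le (Fin.castSucc_lt_iff_succ_le.mp hc) with hc' | hc'
          · exact Or.inr (hc' ▸ hj)
          · exact absurd (hord i.succ j hc' s hs y hj) (not_lt.mpr hys.le)
      rw [hF.2 i]
      intro x hx
      refine ⟨hδ _ hx, ?_⟩
      simp only [Set.mem_setOf_eq]
      split_ifs with h1 h2 h2
      · obtain ⟨c, hc⟩ := hO _ h1
        obtain ⟨s, hs⟩ := hO _ h2
        have hsI : s ∈ I i.succ := by rw [hs]; rfl
        refine ⟨s, hord _ _ hcs x hx s hsI, ih hsI, ?_⟩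
        intro y hxy hys
        rcases hbet x hx s hsI y hxy hys with hy | hy
        · rw [hc] at hx hy
          simp only [Set.mem_singleton_iff] at hx hy
          exact absurd (hy.trans hx.symm) hxy.ne'
        · rw [hs] at hy
          exact absurd hy hys.ne
      · obtain ⟨c, hc⟩ := hO _ h1
        obtain ⟨s, hsI⟩ := hne i.succ
        refine ⟨s, hord _ _ hcs x hx s hsI, ih hsI, ?_⟩
        intro y hxy hys
        rcases hbet x hx s hsI y hxy hys with hy | hy
        · rw [hc] at hx hy
          simp only [Set.mem_singleton_iff] at hx hy
          exact absurd (hy.trans hx.symm) hxy.ne'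
        · exact hδ _ hy
      · obtain ⟨s, hs⟩ := hO _ h2
        have hsI : s ∈ I i.succ := by rw [hs]; rfl
        refine ⟨s, hord _ _ hcs x hx s hsI, ih hsI, ?_⟩
        intro y hxy hys
        rcases hbet x hx s hsI y hxy hys with hy | hy
        · exact hδ _ hy
        · rw [hs] at hy; exact absurd hy hys.ne
      · obtain ⟨s, hsI⟩ := hne i.succ
        have hxs : x < s := hord _ _ hcs x hx s hsI
        refine ⟨s, hxs, Set.Icc x s ∩ I i.castSucc, Set.Icc x s ∩ I i.succ,
          ⟨x, ⟨le_refl x, hxs.le⟩, hx⟩, ⟨s, ⟨hxs.le, le_refl s⟩, hsI⟩,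
          ?_, ?_, ?_, ?_, ?_, ?_, ?_⟩
        · intro a ha b hb c hac hcb
          exact ⟨⟨ha.1.1.trans hac, hcb.trans hb.1.2⟩, hconv _ a ha.2 b hb.2 c hac hcb⟩
        · intro a ha b hb c hac hcb
          exact ⟨⟨ha.1.1.trans hac, hcb.trans hb.1.2⟩, hconv _ a ha.2 b hb.2 c hac hcb⟩
        · apply Set.Subset.antisymm
          · rintro y (hy | hy) <;> exact hy.1
          · intro y hy
            rcases eq_or_lt_of_le hy.1 with h | h
            · exact Or.inl ⟨hy, h ▸ hx⟩
            · rcases eq_or_lt_of_le hy.2 with h' | h'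
              · exact Or.inr ⟨hy, by rw [h']; exact hsI⟩
              · rcases hbet x hx s hsI y h h' with hy' | hy'
                · exact Or.inl ⟨hy, hy'⟩
                · exact Or.inr ⟨hy, hy'⟩
        · rw [Set.disjoint_left]
          rintro a ⟨_, ha1⟩ ⟨_, ha2⟩
          exact absurd (hord _ _ hcs a ha1 a ha2) (lt_irrefl a)
        · rintro a ⟨_, ha⟩ b ⟨_, hb⟩
          exact hord _ _ hcs a ha b hb
        · exact fun a ha => hδ _ ha.2
        · exact fun a ha => ih ha.2
  obtain ⟨j, hj⟩ := hloc t₁ le_rfl ht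
  have hj0 : j = 0 := by
    by_contra hne0
    have hpos : (0 : Fin (n + 1)) < j := lt_of_le_of_ne (Fin.zero_le j) (Ne.symm hne0)
    obtain ⟨x0, hx0⟩ := hne 0
    exact absurd (hIcc 0 hx0).1 (not_le.mpr (hord 0 j hpos x0 hx0 t₁ hj))
  exact key 0 (hj0 ▸ hj)
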